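/- Let $m \geq 2$ be a natural number, $E$ a unit in $\mathbb{Q}(q)$, and let $\varphi \in \mathbb{Q}(q)[[t]]$ be a formal power series satisfying the functional equation $c\,E\,(1 + t + \varphi)^{m} = \varphi\frac{m}{m-1} + \frac{t}{m-1} + \frac{1}{m(m-1)}$ for a nonzero constant $c \in \mathbb{Q}(q)$ (here $m$ plays the role of $q^2$, with exponent $m = q^2$). Then $\varphi$ satisfies the differential equation $(1 - m\varphi)\,\varphi' = (m+1)\varphi + t$ in $\mathbb{Q}(q)[[t]]$, where $\varphi'$ denotes the formal derivative in $t$. -/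

import Mathlib

open PowerSeries

instance : CharZero (RatFunc ℚ) :=
  charZero_of_injective_algebraMap (algebraMap ℚ (RatFunc ℚ)).injective

/-- the algebraic functional equation (2.12) implies the universal
differential equation `(1 - mφ)φ' = (m+1)φ + t`. -/
theorem stmt_5 (m : ℕ) (hm : 2 ≤ m) (E : (RatFunc ℚ)ˣ) (c : RatFunc ℚ) (hc : c ≠ 0)
    (φ : PowerSeries (RatFunc ℚ))
    (heq : C c * C (E : RatFunc ℚ) * (1 + X + φ) ^ m
      = φ * C ((m : RatFunc ℚ) / ((m : RatFunc ℚ) - 1))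
        + X * C (1 / ((m : RatFunc ℚ) - 1))
        + C (1 / ((m : RatFunc ℚ) * ((m : RatFunc ℚ) - 1)))) :
    (1 - C (m : RatFunc ℚ) * φ) * derivative (RatFunc ℚ) φ
      = C ((m : RatFunc ℚ) + 1) * φ + X := by
  set a : RatFunc ℚ := (m : RatFunc ℚ) with ha_def
  have ha : a ≠ 0 := by
    rw [ha_def]; exact_mod_cast (by omega : m ≠ 0)
  have ha1 : a - 1 ≠ 0 := by
    rw [sub_ne_zero, ha_def]; exact_mod_cast (by omega : m ≠ 1)
  -- derivative of heq
  have heq' := congrArg (derivative (RatFunc ℚ)) heq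
  simp only [Derivation.leibniz, Derivation.leibniz_pow, derivative_C, derivative_X,
    map_add, map_one, Derivation.map_one_eq_zero, smul_eq_mul, nsmul_eq_mul,
    mul_zero, zero_mul, add_zero, zero_add, mul_one, smul_zero] at heq'
  rw [show ((m : (RatFunc ℚ)⟦X⟧)) = C a from (map_natCast _ m).symm] at heq'
  rw [one_div, one_div] at heq
  rw [one_div] at heq'
  have hpow : (1 + X + φ)^(m-1) * (1 + X + φ) = (1 + X + φ)^m := by
    rw [← pow_succ]; congr 1; omega
  have heqm : (C c * C (E : RatFunc ℚ) * (1 + X + φ)^m)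
      * (C a * (1 + derivative (RatFunc ℚ) φ))
      = (C (a/(a-1)) * derivative (RatFunc ℚ) φ + C (a-1)⁻¹)
        * (1 + X + φ) := by
    linear_combination (1 + X + φ) * heq'
      - (C c * C (E : RatFunc ℚ) * C a
          * (1 + derivative (RatFunc ℚ) φ)) * hpow
  -- scalar clearing lemmas
  have hA : C (a/(a-1)) * (C a * (C a - 1))
      = C a * C a := by
    have h : (a/(a-1)) * (a*(a-1)) = a*a := by field_simp
    have h2 := congrArg C h
    simpa only [map_mul, map_sub, map_one] using h2
  have hB : C (a-1)⁻¹ * (C a * (C a - 1))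
      = C a := by
    have h : (a-1)⁻¹ * (a*(a-1)) = a := by field_simp
    have h2 := congrArg C h
    simpa only [map_mul, map_sub, map_one] using h2
  have hC : C (a*(a-1))⁻¹ * (C a * (C a - 1))
      = 1 := by
    have h : (a*(a-1))⁻¹ * (a*(a-1)) = 1 := by field_simp
    have h2 := congrArg C h
    simpa only [map_mul, map_sub, map_one] using h2
  set φ' := derivative (RatFunc ℚ) φ with hφ'
  set A := C a with hA_def
  have key : (A * (A - 1)) * ((1 - A * φ) * φ' - ((A + 1)*φ + X)) = 0 := by
    linear_combination (-(A*(A - 1))) * heqm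
      + (A*(A-1)*A*(1+φ')) * heq
      + (A*(1+φ')*φ - (1+X+φ)*φ') * hA
      + (A*(1+φ')*X - (1+X+φ)) * hB
      + (A*(1+φ')) * hC
  have hAne : A * (A - 1) ≠ 0 := by
    have e1 : A * (A - 1) = C (a * (a - 1)) := by
      rw [hA_def, map_mul, map_sub, map_one]
    rw [e1]
    intro h
    exact mul_ne_zero ha ha1 (by simpa using congrArg (constantCoeff) h)
  have hzero := (mul_eq_zero.mp key).resolve_left hAne
  rw [sub_eq_zero] at hzero
  rw [show C (a + 1) = A + 1 by rw [hA_def, map_add, map_one]]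
  exact hzero
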